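/- arXiv:2011.09451 — 2 statements merged into one kernel-verified Lean document; each statement's English description precedes it below -/
import Mathlib

section
/- Let d ≥ 2 and let 𝐪 be the tuple of all quadratic monomials ξ^α with |α| = 2 in d variables (so the tuple has n = d(d+1)/2 components). Then max over m ≥ 1 and 0 ≤ n' ≤ n of 4n' / (2m + 𝔡_{d−m,n'}(𝐪)) equals 4n / (2 + 𝔡_{d−1,n}(𝐪)) = 4n/(d+1) = 2d; in particular the maximum is attained at m = 1 and n' = n, and 𝔡_{d−1,n}(𝐪) = d − 1. -/
open MeasureTheory
open scoped ENNReal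

noncomputable section

namespace GOZZK

/-- A quadratic form in `d` real variables. -/
abbrev QF (d : ℕ) := QuadraticForm ℝ (Fin d → ℝ)

/-- `NV 𝐩`: the number of variables that some component of the tuple `𝐩` of quadratic
forms depends on (equivalently, the number of indices `j` such that `∂_{ξ_j} P ≢ 0` for some
component `P` of `𝐩`). -/
def NV {d : ℕ} {ι : Type*} (Q : ι → QF d) : ℕ :=
  Set.ncard { j : Fin d | ∃ i, ∃ ξ : Fin d → ℝ, Q i (Function.update ξ j 0) ≠ Q i ξ }

/-- `𝔡_{d',n'}(𝐪)`: the infimum of `NV (M' · (𝐪 ∘ M))` over all real `d × d` matrices `M`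
of rank `d'` and all real `n × n` matrices `M'` of rank `n'`. -/
def numvar {d : ℕ} {ι : Type*} [Fintype ι] [DecidableEq ι]
    (Q : ι → QF d) (d' n' : ℕ) : ℕ :=
  sInf { k | ∃ (M : Matrix (Fin d) (Fin d) ℝ) (M' : Matrix ι ι ℝ),
    M.rank = d' ∧ M'.rank = n' ∧
    NV (fun i => ∑ i' : ι, M' i i' • (Q i').comp (Matrix.vecMulLinear M)) = k }

/-- The quadratic form `ξ ↦ ξ_i ξ_j` in `d` variables. -/
def mono {d : ℕ} (i j : Fin d) : QF d :=
  LinearMap.BilinMap.toQuadraticMap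
    (LinearMap.mk₂ ℝ (fun ξ η : Fin d → ℝ => ξ i * η j)
      (fun x y z => by simp [add_mul])
      (fun c x y => by simp [mul_assoc])
      (fun x y z => by simp [mul_add])
      (fun c x y => by simp [smul_eq_mul]; ring))

/-- The tuple of all quadratic monomials `ξ_i ξ_j`, `i ≤ j`, in `d` variables. -/
def fullQuad (d : ℕ) : {ij : Fin d × Fin d // ij.1 ≤ ij.2} → QF d :=
  fun ij => mono ij.1.1 ij.1.2

/-! ### Auxiliary definitions -/

abbrev Idx (d : ℕ) := {ij : Fin d × Fin d // ij.1 ≤ ij.2}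

def c2 (k : ℕ) : ℕ := k * (k + 1) / 2

lemma two_c2 (k : ℕ) : 2 * c2 k = k * (k + 1) :=
  Nat.mul_div_cancel' (Nat.even_mul_succ_self k).two_dvd

lemma c2_strictMono : StrictMono c2 := by
  intro a b h
  have hab : a * (a + 1) < b * (b + 1) :=
    mul_lt_mul'' h (by omega) (Nat.zero_le _) (Nat.zero_le _)
  exact Nat.div_lt_div_of_lt_of_dvd (Nat.even_mul_succ_self b).two_dvd hab

lemma card_Idx (d : ℕ) : Fintype.card (Idx d) = c2 d := by
  have h := Fintype.card_congr (Sym2.sortEquiv (α := Fin d))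
  rw [Sym2.card, Fintype.card_fin] at h
  rw [← h, Nat.choose_two_right, c2, Nat.add_sub_cancel, Nat.mul_comm]

def ee {d : ℕ} (j : Fin d) : Fin d → ℝ := Pi.single j 1

lemma mono_apply {d : ℕ} (i j : Fin d) (ξ : Fin d → ℝ) : mono i j ξ = ξ i * ξ j := rfl

lemma ee_apply {d : ℕ} (j x : Fin d) : ee j x = if x = j then 1 else 0 := Pi.single_apply j 1 x

/-- The coefficient-extraction linear map. -/
def coeffMap (d : ℕ) : QF d →ₗ[ℝ] (Idx d → ℝ) where
  toFun Q := fun ab =>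
    if ab.1.1 = ab.1.2 then Q (ee ab.1.1) else QuadraticMap.polar Q (ee ab.1.1) (ee ab.1.2)
  map_add' Q Q' := by
    funext ab
    by_cases h : ab.1.1 = ab.1.2 <;>
      simp [h, QuadraticMap.polar] <;> ring
  map_smul' r Q := by
    funext ab
    by_cases h : ab.1.1 = ab.1.2 <;>
      simp [h, QuadraticMap.polar, smul_eq_mul] <;> ring

lemma qf_eq_zero_of_coeff_zero {d : ℕ} (Q : QF d) (h : coeffMap d Q = 0) : Q = 0 := by
  classical
  have hdg : ∀ a : Fin d, Q (ee a) = 0 := by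
    intro a
    have := congrFun h ⟨(a, a), le_refl a⟩
    simpa [coeffMap] using this
  have hp : ∀ a b : Fin d, QuadraticMap.polar Q (ee a) (ee b) = 0 := by
    intro a b
    rcases lt_trichotomy a b with hab | rfl | hab
    · have := congrFun h ⟨(a, b), hab.le⟩
      simpa [coeffMap, hab.ne] using this
    · rw [QuadraticMap.polar_self]
      simp [hdg a]
    · rw [QuadraticMap.polar_comm]
      have := congrFun h ⟨(b, a), hab.le⟩
      simpa [coeffMap, hab.ne] using this
  ext ξ
  have hξ : ξ = ∑ a : Fin d, (ξ a) • ee a := by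
    have h1 : ∀ a : Fin d, (ξ a) • ee a = Pi.single a (ξ a) := by
      intro a
      funext x
      by_cases hx : x = a <;> simp [ee, Pi.single_apply, hx]
    simp_rw [h1]
    rw [Finset.univ_sum_single]
  calc Q ξ = Q (∑ a : Fin d, (ξ a) • ee a) := by rw [← hξ]
    _ = 0 := by
        rw [QuadraticMap.map_sum]
        have e1 : ∀ a : Fin d, Q ((ξ a) • ee a) = 0 := by
          intro a; rw [QuadraticMap.map_smul, hdg a]; simp
        have e2 : ∑ ij ∈ Finset.filter (fun ij => ¬ij.IsDiag) (Finset.univ : Finset (Fin d)).sym2,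
            Sym2.lift ⟨fun i j => QuadraticMap.polar (⇑Q) ((ξ i) • ee i) ((ξ j) • ee j),
              fun _ _ => QuadraticMap.polar_comm _ _ _⟩ ij = 0 := by
          refine Finset.sum_eq_zero fun z hz => ?_
          induction z using Sym2.ind with
          | _ a b =>
            rw [Sym2.lift_mk]
            show QuadraticMap.polar (⇑Q) ((ξ a) • ee a) ((ξ b) • ee b) = 0
            rw [QuadraticMap.polar_smul_left, QuadraticMap.polar_smul_right, hp a b]
            simp
        have e3 : (∑ ij ∈ Finset.filter (fun ij => ¬ij.IsDiag) (Finset.univ : Finset (Fin d)).sym2,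
            QuadraticMap.polarSym2 (⇑Q) (Sym2.map (fun a => ξ a • ee a) ij)) = 0 := by
          rw [← e2]
          refine Finset.sum_congr rfl fun z _ => ?_
          induction z using Sym2.ind with
          | _ a b => rfl
        rw [e3]
        simp [e1]



def expandMap (d : ℕ) : (Idx d → ℝ) →ₗ[ℝ] QF d where
  toFun c := ∑ ij : Idx d, c ij • fullQuad d ij
  map_add' c c' := by
    simp only [Pi.add_apply, add_smul]
    rw [Finset.sum_add_distrib]
  map_smul' r c := by
    simp only [Pi.smul_apply, smul_eq_mul, RingHom.id_apply, mul_smul]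
    rw [Finset.smul_sum]

lemma coeff_mono {d : ℕ} (ij ab : Idx d) :
    coeffMap d (fullQuad d ij) ab = if ij = ab then 1 else 0 := by
  obtain ⟨⟨i, j⟩, hij⟩ := ij
  obtain ⟨⟨a, b⟩, hab⟩ := ab
  simp only [coeffMap, LinearMap.coe_mk, AddHom.coe_mk, fullQuad, QuadraticMap.polar, mono_apply]
  by_cases hab' : a = b
  · subst hab'
    rw [if_pos rfl]
    simp only [ee_apply, Subtype.mk.injEq, Prod.mk.injEq]
    by_cases h1 : i = a <;> by_cases h2 : j = a <;> simp [h1, h2]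
  · rw [if_neg hab']
    by_cases h1 : i = a ∧ j = b
    · obtain ⟨rfl, rfl⟩ := h1
      rw [if_pos rfl]
      simp [Pi.add_apply, ee_apply, hab', Ne.symm hab']
    · have h3 : ¬(i = b ∧ j = a) := by
        rintro ⟨rfl, rfl⟩
        exact hab' (le_antisymm hab hij)
      have h4 : ¬((⟨(i, j), hij⟩ : Idx d) = ⟨(a, b), hab⟩) := by
        simp only [Subtype.mk.injEq, Prod.mk.injEq]
        exact h1
      rw [if_neg h4]
      by_cases hia : i = a <;> by_cases hjb : j = b <;> by_cases hib : i = b <;>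
        by_cases hja : j = a <;> simp_all [Pi.add_apply, ee_apply]

lemma coeff_expand (d : ℕ) (c : Idx d → ℝ) : coeffMap d (expandMap d c) = c := by
  funext ab
  have h : coeffMap d (expandMap d c) ab = ∑ ij : Idx d, c ij * (if ij = ab then (1:ℝ) else 0) := by
    rw [show expandMap d c = ∑ ij : Idx d, c ij • fullQuad d ij from rfl, map_sum]
    rw [Finset.sum_apply]
    refine Finset.sum_congr rfl fun ij _ => ?_
    rw [_root_.map_smul, Pi.smul_apply, coeff_mono, smul_eq_mul]
  rw [h]
  simp [mul_ite]

lemma coeff_injective (d : ℕ) : Function.Injective (coeffMap d) := by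
  intro Q Q' h
  have h2 : coeffMap d (Q - Q') = 0 := by rw [map_sub, h, sub_self]
  exact sub_eq_zero.mp (qf_eq_zero_of_coeff_zero _ h2)

lemma expand_coeff (d : ℕ) (Q : QF d) : expandMap d (coeffMap d Q) = Q :=
  coeff_injective d (by rw [coeff_expand])

def coeffEquiv (d : ℕ) : QF d ≃ₗ[ℝ] (Idx d → ℝ) :=
  LinearEquiv.ofBijective (coeffMap d)
    ⟨coeff_injective d, fun c => ⟨expandMap d c, coeff_expand d c⟩⟩

instance (d : ℕ) : FiniteDimensional ℝ (QF d) := Module.Finite.equiv (coeffEquiv d).symm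

lemma finrank_QF (d : ℕ) : Module.finrank ℝ (QF d) = c2 d := by
  rw [(coeffEquiv d).finrank_eq, Module.finrank_pi, card_Idx]

lemma range_expand_top (d : ℕ) : LinearMap.range (expandMap d) = ⊤ :=
  LinearMap.range_eq_top.mpr fun Q => ⟨coeffMap d Q, expand_coeff d Q⟩



/-- Precomposition of a quadratic form with a linear map, as a linear map. -/
def compQF {a b : ℕ} (g : (Fin a → ℝ) →ₗ[ℝ] (Fin b → ℝ)) : QF b →ₗ[ℝ] QF a where
  toFun Q := Q.comp g
  map_add' Q Q' := by
    ext ξ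
    simp [QuadraticMap.comp_apply]
  map_smul' r Q := by
    ext ξ
    simp [QuadraticMap.comp_apply]

lemma compQF_apply {a b : ℕ} (g : (Fin a → ℝ) →ₗ[ℝ] (Fin b → ℝ)) (Q : QF b) (ξ : Fin a → ℝ) :
    compQF g Q ξ = Q (g ξ) := rfl

lemma c2_le_finrank_range_compQF {d : ℕ} (f : (Fin d → ℝ) →ₗ[ℝ] (Fin d → ℝ)) :
    c2 (Module.finrank ℝ (LinearMap.range f)) ≤ Module.finrank ℝ (LinearMap.range (compQF f)) := by
  classical
  set r := Module.finrank ℝ (LinearMap.range f) with hr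
  have h1 : Module.finrank ℝ (Fin r → ℝ) = Module.finrank ℝ (LinearMap.range f) := by
    rw [Module.finrank_pi, Fintype.card_fin]
  obtain ⟨er⟩ := FiniteDimensional.nonempty_linearEquiv_of_finrank_eq h1
  obtain ⟨g, hg⟩ := f.rangeRestrict.exists_rightInverse_of_surjective
    (LinearMap.range_eq_top.mpr f.surjective_rangeRestrict)
  obtain ⟨q, hq⟩ := Submodule.exists_isCompl (LinearMap.range f)
  set π := (LinearMap.range f).projectionOnto q hq with hπ
  set u : (Fin r → ℝ) →ₗ[ℝ] (Fin d → ℝ) := g.comp er.toLinearMap with hu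
  set v : (Fin d → ℝ) →ₗ[ℝ] (Fin r → ℝ) := er.symm.toLinearMap.comp π with hv
  have key : ∀ x : Fin r → ℝ, v (f (u x)) = x := by
    intro x
    have h2 : f (g (er x)) = (er x : Fin d → ℝ) := by
      have h3 := congrArg (fun h : (LinearMap.range f) →ₗ[ℝ] (LinearMap.range f) => h (er x)) hg
      simp only [LinearMap.comp_apply, LinearMap.id_apply] at h3
      have h4 : (f.rangeRestrict (g (er x)) : Fin d → ℝ) = ((er x : LinearMap.range f) : Fin d → ℝ) :=
        congrArg Subtype.val h3
      simpa using h4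
    simp only [hu, hv, LinearMap.comp_apply, LinearEquiv.coe_coe, h2]
    rw [hπ, Submodule.projectionOnto_apply_left hq (er x)]
    simp
  have hli : ∀ Q' : QF r, compQF u ((compQF f) ((compQF v) Q')) = Q' := by
    intro Q'
    ext ξ
    simp [compQF_apply, key ξ]
  have hinj : Function.Injective ((compQF f).comp (compQF v)) := by
    intro Q1 Q2 h
    have h1' := congrArg (compQF u) h
    simp only [LinearMap.comp_apply] at h1' ⊢
    rw [← hli Q1, ← hli Q2]
    exact congrArg (compQF u) (by simpa [LinearMap.comp_apply] using h)
  calc c2 r = Module.finrank ℝ (QF r) := (finrank_QF r).symm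
    _ = Module.finrank ℝ (LinearMap.range ((compQF f).comp (compQF v))) :=
        (LinearMap.finrank_range_of_inj hinj).symm
    _ ≤ Module.finrank ℝ (LinearMap.range (compQF f)) := by
        apply Submodule.finrank_mono
        rw [LinearMap.range_comp]
        exact LinearMap.map_le_range

lemma coeff_eq_zero {d : ℕ} (Q : QF d) (j : Fin d)
    (h : ∀ ξ, Q (Function.update ξ j 0) = Q ξ)
    (ab : Idx d) (hab : ab.1.1 = j ∨ ab.1.2 = j) : coeffMap d Q ab = 0 := by
  have h0 : Q (ee j) = 0 := by
    have h1 : Function.update (ee j) j 0 = 0 := by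
      funext x
      by_cases hx : x = j <;> simp [ee, Function.update_apply, Pi.single_apply, hx]
    have h2 := h (ee j)
    rw [h1] at h2
    simpa using h2.symm
  have hsum : ∀ b : Fin d, b ≠ j → Q (ee j + ee b) = Q (ee b) := by
    intro b hb
    have h1 : Function.update (ee j + ee b) j 0 = ee b := by
      funext x
      by_cases hx : x = j
      · subst hx
        simp [ee, Function.update_apply, Pi.single_apply, (Ne.symm hb)]
      · simp [ee, Function.update_apply, Pi.single_apply, hx]
    have h2 := h (ee j + ee b)
    rw [h1] at h2
    exact h2.symm
  have hpol : ∀ b : Fin d, QuadraticMap.polar (⇑Q) (ee j) (ee b) = 0 := by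
    intro b
    by_cases hb : b = j
    · subst hb
      rw [QuadraticMap.polar_self]
      simp [h0]
    · rw [QuadraticMap.polar, hsum b hb, h0]
      ring
  obtain ⟨⟨a, b⟩, hle⟩ := ab
  simp only at hab
  simp only [coeffMap, LinearMap.coe_mk, AddHom.coe_mk]
  rcases hab with h1 | h1
  · subst h1
    split_ifs with hdd
    · exact h0
    · exact hpol b
  · subst h1
    split_ifs with hdd
    · rw [hdd]; exact h0
    · rw [QuadraticMap.polar_comm]
      exact hpol a

lemma finrank_span_le {d : ℕ} (S : Set (Fin d)) {α : Type*} (P : α → QF d)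
    (hP : ∀ i, ∀ ab : Idx d, (ab.1.1 ∉ S ∨ ab.1.2 ∉ S) → coeffMap d (P i) ab = 0) :
    Module.finrank ℝ (Submodule.span ℝ (Set.range P)) ≤ c2 S.ncard := by
  classical
  haveI : Fintype S := Fintype.ofFinite S
  set T := {ab : Idx d // ab.1.1 ∈ S ∧ ab.1.2 ∈ S} with hT
  have hcard : Fintype.card T ≤ c2 S.ncard := by
    have hinj : Function.Injective
        (fun t : T => (s((⟨t.1.1.1, t.2.1⟩ : S), (⟨t.1.1.2, t.2.2⟩ : S)) : Sym2 S)) := by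
      rintro ⟨⟨⟨a, b⟩, hab⟩, ha, hb⟩ ⟨⟨⟨a', b'⟩, hab'⟩, ha', hb'⟩ h
      simp only [Sym2.eq_iff, Subtype.mk.injEq] at h
      apply Subtype.ext
      apply Subtype.ext
      simp only at *
      rcases h with ⟨h1, h2⟩ | ⟨h1, h2⟩
      · exact Prod.ext h1 h2
      · have e1 : a' = b' := le_antisymm hab' (by rw [← h1, ← h2]; exact hab)
        exact Prod.ext (h1.trans e1.symm) (h2.trans e1)
    have hle := Fintype.card_le_of_injective _ hinj
    rw [Sym2.card, Nat.choose_two_right, Nat.add_sub_cancel, Nat.mul_comm] at hle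
    have hS : S.ncard = Fintype.card S := by
      rw [← Nat.card_coe_set_eq, Nat.card_eq_fintype_card]
    rw [hS]
    exact hle
  have hgood : ∀ Q ∈ Submodule.span ℝ (Set.range P), ∀ ab : Idx d,
      (ab.1.1 ∉ S ∨ ab.1.2 ∉ S) → coeffMap d Q ab = 0 := by
    intro Q hQ
    induction hQ using Submodule.span_induction with
    | mem x hx =>
      obtain ⟨i, rfl⟩ := hx
      exact hP i
    | zero => simp
    | add x y _ _ hx hy =>
      intro ab hab
      rw [map_add]
      simp [hx ab hab, hy ab hab]
    | smul r x _ hx =>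
      intro ab hab
      rw [_root_.map_smul]
      simp [hx ab hab]
  set ρ : QF d →ₗ[ℝ] (T → ℝ) := (LinearMap.funLeft ℝ ℝ (fun t : T => t.1)).comp (coeffMap d) with hρ
  have hinjD : Function.Injective (ρ.domRestrict (Submodule.span ℝ (Set.range P))) := by
    intro x y hxy
    apply Subtype.ext
    have hsub : coeffMap d ((x : QF d) - (y : QF d)) = 0 := by
      funext ab
      by_cases hmem : ab.1.1 ∈ S ∧ ab.1.2 ∈ S
      · have := congrFun hxy ⟨ab, hmem⟩
        simp only [LinearMap.domRestrict_apply, hρ, LinearMap.comp_apply,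
          LinearMap.funLeft_apply] at this
        rw [map_sub]
        simp [this]
      · rw [map_sub]
        have hor : ab.1.1 ∉ S ∨ ab.1.2 ∉ S := by tauto
        simp [hgood _ x.2 ab hor, hgood _ y.2 ab hor]
    have := qf_eq_zero_of_coeff_zero _ hsub
    exact sub_eq_zero.mp this
  have hle2 := LinearMap.finrank_le_finrank_of_injective hinjD
  rw [Module.finrank_pi] at hle2
  exact hle2.trans hcard

lemma key_ineq {d : ℕ} (M : Matrix (Fin d) (Fin d) ℝ) (M' : Matrix (Idx d) (Idx d) ℝ) :
    M'.rank + c2 M.rank ≤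
      c2 (NV (fun i => ∑ i' : Idx d, M' i i' • (fullQuad d i').comp (Matrix.vecMulLinear M)))
        + c2 d := by
  classical
  set f := Matrix.vecMulLinear M with hf
  have hfr : Module.finrank ℝ (LinearMap.range f) = M.rank := by
    have h1 : (Matrix.transpose M).mulVecLin = f := by
      rw [← Matrix.vecMulLinear_transpose (Matrix.transpose M), Matrix.transpose_transpose, hf]
    rw [← h1]
    exact Matrix.rank_transpose M
  set A := compQF f with hA
  set Ψ := A.comp (expandMap d) with hΨ
  have hrangeΨ : LinearMap.range Ψ = LinearMap.range A := by
    rw [hΨ, LinearMap.range_comp, range_expand_top, Submodule.map_top]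
  set R := Submodule.span ℝ (Set.range M') with hR0
  have hRrank : Module.finrank ℝ R = M'.rank := by
    have h2 := Matrix.rank_eq_finrank_span_cols (Matrix.transpose M')
    rw [Matrix.col, Matrix.transpose_transpose] at h2
    rw [hR0, ← h2, Matrix.rank_transpose]
  set P := fun i : Idx d => ∑ i' : Idx d, M' i i' • (fullQuad d i').comp f with hP
  have hPi : ∀ i, P i = Ψ (M' i) := by
    intro i
    rw [hΨ, LinearMap.comp_apply]
    have h3 : expandMap d (M' i) = ∑ i' : Idx d, M' i i' • fullQuad d i' := rfl
    rw [h3, map_sum, hP]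
    refine Finset.sum_congr rfl fun i' _ => ?_
    rw [_root_.map_smul]
    rfl
  have hspan : Submodule.span ℝ (Set.range P) = Submodule.map Ψ R := by
    rw [hR0, Submodule.map_span]
    congr 1
    ext Q
    constructor
    · rintro ⟨i, rfl⟩
      exact ⟨M' i, ⟨i, rfl⟩, (hPi i).symm⟩
    · rintro ⟨_, ⟨i, rfl⟩, rfl⟩
      exact ⟨i, hPi i⟩
  set S := {j : Fin d | ∃ i, ∃ ξ : Fin d → ℝ, P i (Function.update ξ j 0) ≠ P i ξ} with hS
  have hgood : ∀ i, ∀ ab : Idx d, (ab.1.1 ∉ S ∨ ab.1.2 ∉ S) → coeffMap d (P i) ab = 0 := by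
    intro i ab hab
    rcases hab with hj | hj
    · refine coeff_eq_zero _ _ ?_ _ (Or.inl rfl)
      intro ξ
      by_contra hne
      exact hj ⟨i, ξ, hne⟩
    · refine coeff_eq_zero _ _ ?_ _ (Or.inr rfl)
      intro ξ
      by_contra hne
      exact hj ⟨i, ξ, hne⟩
  have hdim1 : Module.finrank ℝ (Submodule.span ℝ (Set.range P)) ≤ c2 S.ncard :=
    finrank_span_le S P hgood
  have h2 : Module.finrank ℝ (LinearMap.range Ψ) + Module.finrank ℝ (LinearMap.ker Ψ) = c2 d := by
    rw [LinearMap.finrank_range_add_finrank_ker, Module.finrank_pi, card_Idx]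
  set D := Ψ.domRestrict R with hD
  have h3 : Module.finrank ℝ (LinearMap.range D) + Module.finrank ℝ (LinearMap.ker D)
      = M'.rank := by
    rw [LinearMap.finrank_range_add_finrank_ker D, hRrank]
  have h4 : Module.finrank ℝ (LinearMap.ker D) ≤ Module.finrank ℝ (LinearMap.ker Ψ) := by
    have hmem : ∀ x : LinearMap.ker D, (R.subtype.comp (LinearMap.ker D).subtype) x
        ∈ LinearMap.ker Ψ := by
      rintro ⟨⟨x, hxR⟩, hxk⟩
      rw [LinearMap.mem_ker] at hxk ⊢
      simpa [hD, LinearMap.domRestrict_apply] using hxk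
    refine LinearMap.finrank_le_finrank_of_injective
      (f := LinearMap.codRestrict (LinearMap.ker Ψ) (R.subtype.comp (LinearMap.ker D).subtype)
        hmem) ?_
    intro x y hxy
    have h5 : ((x : R) : Idx d → ℝ) = ((y : R) : Idx d → ℝ) := by
      have := congrArg Subtype.val hxy
      simpa using this
    exact Subtype.ext (Subtype.ext h5)
  have h5 : Module.finrank ℝ (LinearMap.range D)
      = Module.finrank ℝ (Submodule.span ℝ (Set.range P)) := by
    rw [hD, LinearMap.range_domRestrict, hspan]
  have h6 : c2 M.rank ≤ Module.finrank ℝ (LinearMap.range A) := by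
    rw [← hfr]
    exact c2_le_finrank_range_compQF f
  have h7 : Module.finrank ℝ (LinearMap.range Ψ) = Module.finrank ℝ (LinearMap.range A) := by
    rw [hrangeΨ]
  have hNV : NV P = S.ncard := rfl
  rw [hNV]
  omega

def finLtEquiv {N k : ℕ} (h : k ≤ N) : {i : Fin N // (i : ℕ) < k} ≃ Fin k where
  toFun i := ⟨i.1, i.2⟩
  invFun j := ⟨⟨j.1, lt_of_lt_of_le j.2 h⟩, j.2⟩
  left_inv := by rintro ⟨⟨i, hi⟩, h2⟩; rfl
  right_inv := by rintro ⟨j, hj⟩; rfl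

lemma rank_diag_ind {α : Type*} [Fintype α] [DecidableEq α] {k : ℕ}
    (h : k ≤ Fintype.card α) (e : α ≃ Fin (Fintype.card α)) :
    (Matrix.diagonal (fun a => if ((e a : ℕ)) < k then (1 : ℝ) else 0)).rank = k := by
  classical
  rw [Matrix.rank_diagonal]
  have e1 : {a // (if ((e a : ℕ)) < k then (1 : ℝ) else 0) ≠ 0} ≃ {a // (e a : ℕ) < k} :=
    Equiv.subtypeEquivRight (fun a => by by_cases hh : (e a : ℕ) < k <;> simp [hh])
  have e2 : {a // (e a : ℕ) < k} ≃ {i : Fin (Fintype.card α) // (i : ℕ) < k} :=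
    e.subtypeEquiv (fun a => Iff.rfl)
  rw [Fintype.card_congr ((e1.trans e2).trans (finLtEquiv h)), Fintype.card_fin]

lemma exists_rank {α : Type*} [Fintype α] [DecidableEq α] {k : ℕ} (h : k ≤ Fintype.card α) :
    ∃ M : Matrix α α ℝ, M.rank = k :=
  ⟨_, rank_diag_ind h (Fintype.equivFin α)⟩

lemma numvar_spec {d : ℕ} (d' n' : ℕ) (hd' : d' ≤ d) (hn' : n' ≤ c2 d) :
    ∃ (M : Matrix (Fin d) (Fin d) ℝ) (M' : Matrix (Idx d) (Idx d) ℝ),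
      M.rank = d' ∧ M'.rank = n' ∧
      NV (fun i => ∑ i' : Idx d, M' i i' • (fullQuad d i').comp (Matrix.vecMulLinear M))
        = numvar (fullQuad d) d' n' := by
  obtain ⟨M, hM⟩ := exists_rank (α := Fin d) (k := d') (by simpa using hd')
  obtain ⟨M', hM'⟩ := exists_rank (α := Idx d) (k := n') (by rwa [card_Idx])
  have hne : { k | ∃ (M : Matrix (Fin d) (Fin d) ℝ) (M' : Matrix (Idx d) (Idx d) ℝ),
      M.rank = d' ∧ M'.rank = n' ∧
      NV (fun i => ∑ i' : Idx d, M' i i' • (fullQuad d i').comp (Matrix.vecMulLinear M)) = k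
      }.Nonempty := ⟨_, M, M', hM, hM', rfl⟩
  have := Nat.sInf_mem hne
  obtain ⟨M0, M0', h1, h2, h3⟩ := this
  exact ⟨M0, M0', h1, h2, h3⟩

lemma numvar_lower {d : ℕ} (d' n' : ℕ) (hd' : d' ≤ d) (hn' : n' ≤ c2 d) :
    n' + c2 d' ≤ c2 (numvar (fullQuad d) d' n') + c2 d := by
  obtain ⟨M, M', h1, h2, h3⟩ := numvar_spec d' n' hd' hn'
  have h4 := key_ineq M M'
  rw [h1, h2, h3] at h4
  exact h4

lemma numvar_upper {d : ℕ} (hd : 1 ≤ d) : numvar (fullQuad d) (d - 1) (c2 d) ≤ d - 1 := by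
  classical
  set w : Fin d → ℝ := fun j => if (j : ℕ) < d - 1 then 1 else 0 with hw
  set M := Matrix.diagonal w with hM0
  have hM : M.rank = d - 1 := by
    rw [hM0, Matrix.rank_diagonal]
    have e1 : {a : Fin d // w a ≠ 0} ≃ {a : Fin d // (a : ℕ) < d - 1} :=
      Equiv.subtypeEquivRight (fun a => by by_cases hh : (a : ℕ) < d - 1 <;> simp [hw, hh])
    rw [Fintype.card_congr (e1.trans (finLtEquiv (Nat.sub_le d 1))), Fintype.card_fin]
  have hM' : (1 : Matrix (Idx d) (Idx d) ℝ).rank = c2 d := by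
    rw [Matrix.rank_one, card_Idx]
  apply Nat.sInf_le
  refine ⟨M, 1, hM, hM', ?_⟩
  have htuple : (fun i => ∑ i' : Idx d,
        (1 : Matrix (Idx d) (Idx d) ℝ) i i' • (fullQuad d i').comp (Matrix.vecMulLinear M))
      = fun i => (fullQuad d i).comp (Matrix.vecMulLinear M) := by
    funext i
    rw [Finset.sum_eq_single i]
    · simp [Matrix.one_apply]
    · intro b _ hb
      simp [Matrix.one_apply, Ne.symm hb]
    · intro hi
      exact absurd (Finset.mem_univ i) hi
  rw [htuple]
  have happ : ∀ (a b : Fin d) (hab : a ≤ b) (η : Fin d → ℝ),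
      ((fullQuad d ⟨(a, b), hab⟩).comp (Matrix.vecMulLinear M)) η
        = (η a * w a) * (η b * w b) := by
    intro a b hab η
    rw [QuadraticMap.comp_apply]
    show mono a b (Matrix.vecMul η M) = _
    rw [mono_apply, hM0, Matrix.vecMul_diagonal, Matrix.vecMul_diagonal]
  have hset : {j : Fin d | ∃ i : Idx d, ∃ ξ : Fin d → ℝ,
      ((fullQuad d i).comp (Matrix.vecMulLinear M)) (Function.update ξ j 0)
        ≠ ((fullQuad d i).comp (Matrix.vecMulLinear M)) ξ}
      = {j : Fin d | (j : ℕ) < d - 1} := by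
    ext j
    simp only [Set.mem_setOf_eq]
    constructor
    · rintro ⟨⟨⟨a, b⟩, hab⟩, ξ, hne⟩
      by_contra hj
      apply hne
      rw [happ a b hab, happ a b hab]
      have hwj : w j = 0 := by simp [hw, hj]
      by_cases ha : a = j
      · subst ha
        rw [hwj]
        ring
      · by_cases hb : b = j
        · subst hb
          rw [hwj]
          ring
        · rw [Function.update_of_ne ha, Function.update_of_ne hb]
    · intro hj
      refine ⟨⟨(j, j), le_refl j⟩, fun _ => 1, ?_⟩
      rw [happ j j (le_refl j), happ j j (le_refl j)]
      have hwj : w j = 1 := by simp [hw, hj]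
      rw [hwj, Function.update_self]
      norm_num
  show Set.ncard _ = d - 1
  rw [hset]
  have : {j : Fin d | (j : ℕ) < d - 1}.ncard = d - 1 := by
    rw [← Nat.card_coe_set_eq]
    exact Nat.card_eq_of_equiv_fin (finLtEquiv (Nat.sub_le d 1))
  exact this

lemma numvar_eq {d : ℕ} (hd : 1 ≤ d) : numvar (fullQuad d) (d - 1) (c2 d) = d - 1 := by
  refine le_antisymm (numvar_upper hd) ?_
  have h := numvar_lower (d - 1) (c2 d) (Nat.sub_le d 1) (le_refl _)
  have h2 : c2 (d - 1) ≤ c2 (numvar (fullQuad d) (d - 1) (c2 d)) := by omega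
  exact c2_strictMono.le_iff_le.mp h2

lemma term_bound_nat {d : ℕ} (hd : 2 ≤ d) (m : ℕ) (hm : 1 ≤ m) (n' : ℕ) (hn' : n' ≤ c2 d) :
    2 * n' ≤ 2 * d * m + d * numvar (fullQuad d) (d - m) n' := by
  set k := numvar (fullQuad d) (d - m) n' with hk
  have H : n' + c2 (d - m) ≤ c2 k + c2 d := numvar_lower (d - m) n' (Nat.sub_le d m) hn'
  have H2 : 2 * n' + 2 * c2 (d - m) ≤ 2 * c2 k + 2 * c2 d := by omega
  rw [two_c2, two_c2] at H2
  have h2n : 2 * n' ≤ d * (d + 1) := by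
    have := two_c2 d
    omega
  rcases le_or_gt m d with hmd | hmd
  · obtain ⟨r, hr⟩ : ∃ r, d = m + r := ⟨d - m, by omega⟩
    have hrdm : d - m = r := by omega
    rw [hrdm, two_c2] at H2
    rcases le_or_gt d k with hkd | hkd
    · have h1 : d * d ≤ d * k := Nat.mul_le_mul_left d hkd
      have h2 : d ≤ 2 * d * m := by nlinarith
      nlinarith
    · have h1 : k * (k + 1) ≤ k * d := Nat.mul_le_mul_left k (by omega)
      nlinarith [H2, h1, hr, hm]
  · have h1 : d * (d + 1) ≤ 2 * d * m := by nlinarith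
    omega

lemma term_bound {d : ℕ} (hd : 2 ≤ d) (m : ℕ) (hm : 1 ≤ m) (n' : ℕ) (hn' : n' ≤ c2 d) :
    4 * (n' : ℝ) / (2 * (m : ℝ) + (numvar (fullQuad d) (d - m) n' : ℝ)) ≤ 2 * (d : ℝ) := by
  have Hnat := term_bound_nat hd m hm n' hn'
  set k := numvar (fullQuad d) (d - m) n' with hk
  have hden : (0 : ℝ) < 2 * (m : ℝ) + (k : ℝ) := by
    have h1 : (1 : ℝ) ≤ (m : ℝ) := by exact_mod_cast hm
    have h2 : (0 : ℝ) ≤ (k : ℝ) := Nat.cast_nonneg k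
    linarith
  rw [div_le_iff₀ hden]
  have hcast : (2 * n' : ℝ) ≤ 2 * (d : ℝ) * (m : ℝ) + (d : ℝ) * (k : ℝ) := by
    exact_mod_cast Hnat
  nlinarith [hcast]

/-- Claim 2.4: for the tuple `𝐪` of all quadratic monomials in `d ≥ 2`
variables (with `n = d(d+1)/2`), `max_{m ≥ 1} max_{0 ≤ n' ≤ n} 4n'/(2m + 𝔡_{d-m,n'}(𝐪))`
equals `4n/(2 + 𝔡_{d-1,n}(𝐪)) = 4n/(d+1) = 2d`, the maximum being attained at `m = 1`,
`n' = n`, and `𝔡_{d-1,n}(𝐪) = d - 1`. -/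
theorem statement_7 (d : ℕ) (hd : 2 ≤ d) :
    (⨆ m : {m : ℕ // 1 ≤ m}, ⨆ n' : Fin (d * (d + 1) / 2 + 1),
        4 * ((n' : ℕ) : ℝ) /
          (2 * ((m : ℕ) : ℝ) + (numvar (fullQuad d) (d - (m : ℕ)) (n' : ℕ) : ℝ)))
        = 4 * ((d * (d + 1) / 2 : ℕ) : ℝ) /
            (2 + (numvar (fullQuad d) (d - 1) (d * (d + 1) / 2) : ℝ)) ∧
    4 * ((d * (d + 1) / 2 : ℕ) : ℝ) /
        (2 + (numvar (fullQuad d) (d - 1) (d * (d + 1) / 2) : ℝ))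
      = 4 * ((d * (d + 1) / 2 : ℕ) : ℝ) / ((d : ℝ) + 1) ∧
    4 * ((d * (d + 1) / 2 : ℕ) : ℝ) / ((d : ℝ) + 1) = 2 * (d : ℝ) ∧
    numvar (fullQuad d) (d - 1) (d * (d + 1) / 2) = d - 1 := by
  have hd1 : 1 ≤ d := by omega
  have hnum : numvar (fullQuad d) (d - 1) (d * (d + 1) / 2) = d - 1 := numvar_eq hd1
  have hne : ((d : ℝ) + 1) ≠ 0 := by positivity
  have hcastn : ((d * (d + 1) / 2 : ℕ) : ℝ) = (d : ℝ) * ((d : ℝ) + 1) / 2 := by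
    rw [Nat.cast_div (Nat.even_mul_succ_self d).two_dvd (by norm_num)]
    push_cast
    ring
  have hcastd1 : ((d - 1 : ℕ) : ℝ) = (d : ℝ) - 1 := by
    push_cast [hd1]
    ring
  have part3 : 4 * ((d * (d + 1) / 2 : ℕ) : ℝ) / ((d : ℝ) + 1) = 2 * (d : ℝ) := by
    rw [hcastn, div_eq_iff hne]
    ring
  have part2 : 4 * ((d * (d + 1) / 2 : ℕ) : ℝ) /
        (2 + (numvar (fullQuad d) (d - 1) (d * (d + 1) / 2) : ℝ))
      = 4 * ((d * (d + 1) / 2 : ℕ) : ℝ) / ((d : ℝ) + 1) := by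
    rw [hnum, hcastd1]
    congr 1
    ring
  have hbound : ∀ (m : {m : ℕ // 1 ≤ m}) (n' : Fin (d * (d + 1) / 2 + 1)),
      4 * ((n' : ℕ) : ℝ) /
          (2 * ((m : ℕ) : ℝ) + (numvar (fullQuad d) (d - (m : ℕ)) (n' : ℕ) : ℝ))
        ≤ 2 * (d : ℝ) :=
    fun m n' => term_bound hd m.1 m.2 n'.1 (Nat.lt_succ_iff.mp n'.isLt)
  have part1 : (⨆ m : {m : ℕ // 1 ≤ m}, ⨆ n' : Fin (d * (d + 1) / 2 + 1),
        4 * ((n' : ℕ) : ℝ) /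
          (2 * ((m : ℕ) : ℝ) + (numvar (fullQuad d) (d - (m : ℕ)) (n' : ℕ) : ℝ)))
      = 2 * (d : ℝ) := by
    set F : {m : ℕ // 1 ≤ m} → Fin (d * (d + 1) / 2 + 1) → ℝ := fun m n' =>
        4 * ((n' : ℕ) : ℝ) /
          (2 * ((m : ℕ) : ℝ) + (numvar (fullQuad d) (d - (m : ℕ)) (n' : ℕ) : ℝ)) with hF
    have hFval : F ⟨1, le_refl 1⟩ (Fin.last (d * (d + 1) / 2)) = 2 * (d : ℝ) := by
      show 4 * (((Fin.last (d * (d + 1) / 2) : Fin (d * (d + 1) / 2 + 1)) : ℕ) : ℝ) /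
          (2 * ((1 : ℕ) : ℝ) +
            (numvar (fullQuad d) (d - 1)
              ((Fin.last (d * (d + 1) / 2) : Fin (d * (d + 1) / 2 + 1)) : ℕ) : ℝ))
        = 2 * (d : ℝ)
      simp only [Fin.val_last]
      rw [hnum, hcastd1, hcastn]
      have hden : 2 * ((1 : ℕ) : ℝ) + ((d : ℝ) - 1) = (d : ℝ) + 1 := by
        push_cast
        ring
      rw [hden, div_eq_iff hne]
      ring
    apply le_antisymm
    · exact ciSup_le fun m => ciSup_le fun n' => hbound m n'
    · have hbddO : BddAbove (Set.range fun m : {m : ℕ // 1 ≤ m} => ⨆ n', F m n') := by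
        refine ⟨2 * (d : ℝ), ?_⟩
        rintro x ⟨m, rfl⟩
        exact ciSup_le fun n' => hbound m n'
      calc (2 : ℝ) * d = F ⟨1, le_refl 1⟩ (Fin.last (d * (d + 1) / 2)) := hFval.symm
        _ ≤ ⨆ n', F ⟨1, le_refl 1⟩ n' :=
            le_ciSup (Set.Finite.bddAbove (Set.finite_range _)) _
        _ ≤ ⨆ m, ⨆ n', F m n' := le_ciSup hbddO ⟨1, le_refl 1⟩
  refine ⟨?_, part2, part3, hnum⟩
  rw [part1, part2, part3]


end GOZZK
end
end

section
/- Let 𝔽 = ℝ(ξ_1, …, ξ_d) be the field of rational functions in d variables over ℝ. Let A = (Σ_k a_{i,j,k} ξ_k)_{i,j} be an N_1 × N_2 matrix whose entries are homogeneous linear forms with real coefficients, and suppose rank_𝔽 A = r. Then there exist invertible real matrices B (N_1 × N_1) and B' (N_2 × N_2) such that BAB' has a zero block of size (N_1 − r) × (N_2 − r), i.e., BAB' = [[∗, ∗], [∗, 0]] with the 0 block in the lower-right corner of size (N_1 − r) × (N_2 − r). -/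
open MeasureTheory
open scoped ENNReal

noncomputable section

namespace GOZZK

open Module Submodule Matrix

section Aux

variable {K : Type*} [Field K]

/-- From any finite family one can extract an injectively indexed linearly independent
subfamily whose size is the finrank of the span. -/
lemma exists_subfamily {n : ℕ} {V : Type*} [AddCommGroup V] [Module K V]
    (v : Fin n → V) (s : ℕ) (hs : finrank K (span K (Set.range v)) = s) :
    ∃ g : Fin s → Fin n, Function.Injective g ∧
      LinearIndependent K (fun j => v (g j)) := by
  classical
  obtain ⟨b, hbsub, hbspan, hbli⟩ := exists_linearIndependent K (Set.range v)
  have hbfin : b.Finite := (Set.finite_range v).subset hbsub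
  haveI : Fintype b := hbfin.fintype
  have hcard : Fintype.card b = s := by
    rw [← Set.toFinset_card, ← finrank_span_set_eq_card hbli, hbspan, hs]
  let e : Fin s ≃ b := (Fintype.equivFinOfCardEq hcard).symm
  have hmem : ∀ x : b, ∃ i, v i = (x : V) := fun x => hbsub x.2
  choose g hg using fun j => hmem (e j)
  refine ⟨g, ?_, ?_⟩
  · intro j j' h
    have hvv : ((e j : b) : V) = ((e j' : b) : V) := by rw [← hg j, ← hg j', h]
    exact e.injective (Subtype.ext hvv)
  · have hfun : (fun j => v (g j)) = (fun x : b => (x : V)) ∘ e := by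
      funext j; simp [hg j]
    rw [hfun]
    exact hbli.comp e e.injective

/-- If the columns of an `m × s` matrix are linearly independent, then some `s` rows
form an invertible square matrix. -/
lemma cols_independent_exists_rows {m s : ℕ} (C : Matrix (Fin m) (Fin s) K)
    (h : LinearIndependent K (fun j => Cᵀ j)) :
    ∃ f : Fin s → Fin m, IsUnit (C.submatrix f id) := by
  have hrank : C.rank = s := by
    rw [rank_eq_finrank_span_cols, finrank_span_eq_card (show LinearIndependent K C.col from h), Fintype.card_fin]
  have hspan : finrank K (span K (Set.range (fun i : Fin m => C i))) = s := by
    have h1 : Cᵀ.rank = s := by rw [rank_transpose]; exact hrank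
    rw [rank_eq_finrank_span_cols] at h1
    exact h1
  obtain ⟨f, hfinj, hfli⟩ := exists_subfamily (fun i : Fin m => C i) s hspan
  refine ⟨f, ?_⟩
  rw [← Matrix.linearIndependent_rows_iff_isUnit]
  exact hfli

/-- A matrix of rank `s` has an invertible `s × s` submatrix. -/
lemma exists_invertible_submatrix {m n : ℕ} (M : Matrix (Fin m) (Fin n) K) {s : ℕ}
    (hs : M.rank = s) :
    ∃ (f : Fin s → Fin m) (g : Fin s → Fin n), IsUnit (M.submatrix f g) := by
  have h1 : finrank K (span K (Set.range (fun j : Fin n => Mᵀ j))) = s := by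
    rw [show (fun j : Fin n => Mᵀ j) = M.col from rfl, ← rank_eq_finrank_span_cols]; exact hs
  obtain ⟨g, hginj, hgli⟩ := exists_subfamily (fun j : Fin n => Mᵀ j) s h1
  have hcols : LinearIndependent K (fun t => (M.submatrix id g)ᵀ t) := hgli
  obtain ⟨f, hunit⟩ := cols_independent_exists_rows (M.submatrix id g) hcols
  refine ⟨f, g, ?_⟩
  rwa [Matrix.submatrix_submatrix] at hunit

/-- If a matrix has an invertible `s × s` submatrix then its rank is at least `s`. -/
lemma le_rank_of_submatrix {m n s : ℕ} (M : Matrix (Fin m) (Fin n) K)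
    (f : Fin s → Fin m) (g : Fin s → Fin n) (h : IsUnit (M.submatrix f g)) :
    s ≤ M.rank := by
  classical
  have key : M.submatrix f g =
      (Matrix.of fun (t : Fin s) (i : Fin m) => if i = f t then (1 : K) else 0) * M *
      (Matrix.of fun (j : Fin n) (t : Fin s) => if j = g t then (1 : K) else 0) := by
    ext t t'
    simp only [Matrix.mul_apply, Matrix.of_apply, ite_mul, one_mul, zero_mul,
      Finset.sum_ite_eq', Finset.mem_univ, if_true, mul_ite, mul_zero, mul_one,
      Matrix.submatrix_apply, id_eq]
  have h1 : (M.submatrix f g).rank = s := by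
    rw [Matrix.rank_of_isUnit _ h, Fintype.card_fin]
  calc s = (M.submatrix f g).rank := h1.symm
    _ ≤ M.rank := by
        rw [key]
        exact le_trans (Matrix.rank_mul_le_left _ _)
          (Matrix.rank_mul_le_right _ _)

end Aux

section Flanders

open Polynomial in
/-- Flanders-type lemma: if `M₀` has maximal rank among the pencil `M₀ + t • X`,
then vectors in the kernels of `M₀ᵀ` and `M₀` pair to zero through `X`. -/
lemma flanders {N₁ N₂ : ℕ} (M₀ X : Matrix (Fin N₁) (Fin N₂) ℝ)
    (hmax : ∀ t : ℝ, (M₀ + t • X).rank ≤ M₀.rank)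
    {u : Fin N₁ → ℝ} {v : Fin N₂ → ℝ}
    (hu : M₀ᵀ.mulVec u = 0) (hv : M₀.mulVec v = 0) :
    u ⬝ᵥ X.mulVec v = 0 := by
  classical
  by_contra hδ
  set r₀ := M₀.rank with hr₀
  set w := X.mulVec v with hw_def
  have hw : w ∉ LinearMap.range M₀.mulVecLin := by
    rintro ⟨z, hz⟩
    apply hδ
    rw [← hz, Matrix.mulVecLin_apply, Matrix.dotProduct_mulVec,
      ← Matrix.mulVec_transpose, hu, zero_dotProduct]
  have hfin : finrank ℝ (LinearMap.range M₀.mulVecLin) = r₀ := rfl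
  let β : Basis (Fin r₀) ℝ (LinearMap.range M₀.mulVecLin) :=
    Module.finBasisOfFinrankEq ℝ _ hfin
  have hmem : ∀ i : Fin r₀, ∃ z, M₀.mulVec z = (β i : Fin N₁ → ℝ) := by
    intro i
    obtain ⟨z, hz⟩ := LinearMap.mem_range.mp (β i).2
    exact ⟨z, hz⟩
  choose p hp using hmem
  set G : ℝ → Fin (r₀ + 1) → (Fin N₁ → ℝ) :=
    fun t => Fin.snoc (fun i => (M₀ + t • X).mulVec (p i)) w with hG_def
  have hG0 : LinearIndependent ℝ (G 0) := by
    have hzero : (fun i => (M₀ + (0 : ℝ) • X).mulVec (p i)) =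
        fun i => (β i : Fin N₁ → ℝ) := by
      funext i; rw [zero_smul, add_zero, hp]
    rw [hG_def]
    show LinearIndependent ℝ (Fin.snoc (fun i => (M₀ + (0 : ℝ) • X).mulVec (p i)) w)
    rw [hzero, linearIndependent_fin_snoc]
    constructor
    · exact β.linearIndependent.map' (Submodule.subtype _) (Submodule.ker_subtype _)
    · intro hmem'
      apply hw
      have hsp : span ℝ (Set.range (fun i => (β i : Fin N₁ → ℝ))) =
          LinearMap.range M₀.mulVecLin := by
        have : Set.range (fun i => (β i : Fin N₁ → ℝ)) =
            (Submodule.subtype _) '' (Set.range β) := by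
          rw [← Set.range_comp]; rfl
        rw [this, ← Submodule.map_span, β.span_eq, Submodule.map_subtype_top]
      rwa [hsp] at hmem'
  set D : Fin (r₀ + 1) → (Fin N₁ → ℝ) :=
    Fin.snoc (fun i => X.mulVec (p i)) 0 with hD_def
  have hGt : ∀ t : ℝ, G t = fun j => G 0 j + t • D j := by
    intro t
    funext j
    refine Fin.lastCases ?_ (fun i => ?_) j
    · simp only [hG_def, hD_def, Fin.snoc_last, smul_zero, add_zero]
    · simp only [hG_def, hD_def, Fin.snoc_castSucc]
      rw [Matrix.add_mulVec, Matrix.add_mulVec, Matrix.smul_mulVec,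
        Matrix.smul_mulVec, zero_smul, add_zero]
  -- columns matrix at time 0
  set C0 : Matrix (Fin N₁) (Fin (r₀ + 1)) ℝ := Matrix.of fun i j => G 0 j i with hC0
  have hC0cols : LinearIndependent ℝ (fun j => C0ᵀ j) := hG0
  obtain ⟨f, hfu⟩ := cols_independent_exists_rows C0 hC0cols
  -- polynomial matrix
  set Pm : Matrix (Fin (r₀ + 1)) (Fin (r₀ + 1)) (Polynomial ℝ) :=
    Matrix.of fun i j => Polynomial.C (G 0 j (f i)) + Polynomial.X * Polynomial.C (D j (f i))
    with hPm
  have hPeval : ∀ t : ℝ, Pm.map (Polynomial.evalRingHom t) =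
      Matrix.of fun (i : Fin (r₀ + 1)) (j : Fin (r₀ + 1)) => G t j (f i) := by
    intro t
    ext i j
    simp only [Matrix.map_apply, Matrix.of_apply, hPm, coe_evalRingHom, Polynomial.eval_add,
      Polynomial.eval_mul, Polynomial.eval_C, Polynomial.eval_X]
    rw [hGt t]
    simp [smul_eq_mul]
  have hdet0 : Pm.det.eval 0 ≠ 0 := by
    have h0 : Pm.map (Polynomial.evalRingHom 0) = C0.submatrix f id := by
      rw [hPeval 0]; ext i j; rfl
    have : (Polynomial.evalRingHom 0) Pm.det = (C0.submatrix f id).det := by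
      rw [RingHom.map_det, RingHom.mapMatrix_apply, h0]
    rw [show Pm.det.eval 0 = (Polynomial.evalRingHom 0) Pm.det from rfl, this]
    exact ((Matrix.isUnit_iff_isUnit_det _).mp hfu).ne_zero
  have hPmdet : Pm.det ≠ 0 := fun h => hdet0 (by rw [h, Polynomial.eval_zero])
  have hq : (Polynomial.X * Pm.det : Polynomial ℝ) ≠ 0 :=
    mul_ne_zero Polynomial.X_ne_zero hPmdet
  obtain ⟨t, ht⟩ : ∃ t : ℝ, ¬ (Polynomial.X * Pm.det : Polynomial ℝ).IsRoot t := by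
    have hfin' := Polynomial.finite_setOf_isRoot hq
    have : {x : ℝ | (Polynomial.X * Pm.det : Polynomial ℝ).IsRoot x}ᶜ.Infinite :=
      Set.Finite.infinite_compl hfin'
    obtain ⟨t, ht⟩ := this.nonempty
    exact ⟨t, ht⟩
  rw [Polynomial.IsRoot, Polynomial.eval_mul, Polynomial.eval_X] at ht
  have htne : t ≠ 0 := by
    intro h0; apply ht; rw [h0, zero_mul]
  have hdet_t : Pm.det.eval t ≠ 0 := by
    intro h0; apply ht; rw [h0, mul_zero]
  -- the square matrix at time t is invertible
  set Ct : Matrix (Fin (r₀ + 1)) (Fin (r₀ + 1)) ℝ :=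
    Matrix.of fun i j => G t j (f i) with hCt
  have hCtu : IsUnit Ct := by
    rw [Matrix.isUnit_iff_isUnit_det, isUnit_iff_ne_zero]
    have : (Polynomial.evalRingHom t) Pm.det = Ct.det := by
      rw [RingHom.map_det, RingHom.mapMatrix_apply, hPeval t]
    rw [← this]
    exact hdet_t
  -- columns of Ct independent => G t independent
  have hGtind : LinearIndependent ℝ (G t) := by
    rw [Fintype.linearIndependent_iff]
    intro c hc j
    have hCtinj : Function.Injective Ct.mulVec :=
      Matrix.mulVec_injective_iff_isUnit.mpr hCtu
    have hmv : Ct.mulVec c = 0 := by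
      funext i
      have := congrFun hc (f i)
      simp only [Finset.sum_apply, Pi.smul_apply, smul_eq_mul, Pi.zero_apply] at this
      rw [Matrix.mulVec, Pi.zero_apply]
      simp only [dotProduct, hCt, Matrix.of_apply]
      rw [← this]
      exact Finset.sum_congr rfl fun j' _ => mul_comm _ _
    have : c = 0 := by
      apply hCtinj
      rw [hmv, Matrix.mulVec_zero]
    rw [this]; rfl
  -- all G t j lie in the range of (M₀ + t • X)
  have hrange : ∀ j, G t j ∈ LinearMap.range (M₀ + t • X).mulVecLin := by
    intro j
    refine Fin.lastCases ?_ (fun i => ?_) j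
    · have : (M₀ + t • X).mulVec (t⁻¹ • v) = w := by
        rw [Matrix.mulVec_smul, Matrix.add_mulVec, hv, Matrix.smul_mulVec, zero_add,
          ← hw_def, smul_smul, inv_mul_cancel₀ htne, one_smul]
      have hlast : G t (Fin.last r₀) = w := by simp [hG_def]
      rw [hlast, ← this]
      exact ⟨t⁻¹ • v, rfl⟩
    · have hcs : G t (Fin.castSucc i) = (M₀ + t • X).mulVec (p i) := by simp [hG_def]
      rw [hcs]
      exact ⟨p i, rfl⟩
  have hspanle : span ℝ (Set.range (G t)) ≤ LinearMap.range (M₀ + t • X).mulVecLin := by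
    rw [Submodule.span_le]
    rintro x ⟨j, rfl⟩
    exact hrange j
  have hcontra : r₀ + 1 ≤ (M₀ + t • X).rank := by
    have h1 : finrank ℝ (span ℝ (Set.range (G t))) = r₀ + 1 := by
      rw [finrank_span_eq_card hGtind, Fintype.card_fin]
    rw [← h1]
    exact Submodule.finrank_mono hspanle
  have := hmax t
  omega

end Flanders

section BasisTail

/-- A basis of `ℝ^N` whose last `N - s` vectors lie in a prescribed subspace of
dimension `N - s`. -/
lemma exists_basis_with_tail {N s : ℕ} (hsN : s ≤ N) (W : Submodule ℝ (Fin N → ℝ))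
    (hW : finrank ℝ W = N - s) :
    ∃ b : Fin N → (Fin N → ℝ), LinearIndependent ℝ b ∧
      ∀ j : Fin N, s ≤ (j : ℕ) → b j ∈ W := by
  obtain ⟨W', hcompl⟩ := W.exists_isCompl
  have htot : finrank ℝ W + finrank ℝ W' = N := by
    rw [Submodule.finrank_add_eq_of_isCompl hcompl]
    simp [Module.finrank_pi]
  have hW' : finrank ℝ W' = s := by omega
  let bW : Basis (Fin (N - s)) ℝ W := Module.finBasisOfFinrankEq ℝ W hW
  let bW' : Basis (Fin s) ℝ W' := Module.finBasisOfFinrankEq ℝ W' hW'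
  let bb : Basis (Fin s ⊕ Fin (N - s)) ℝ (Fin N → ℝ) :=
    (bW'.prod bW).map (Submodule.prodEquivOfIsCompl W' W hcompl.symm)
  let e : (Fin s ⊕ Fin (N - s)) ≃ Fin N := finSumFinEquiv.trans (finCongr (by omega))
  let bfin := bb.reindex e
  refine ⟨fun j => bfin j, bfin.linearIndependent, ?_⟩
  intro j hj
  have hjs : (j : ℕ) - s < N - s := by omega
  have hje : e (Sum.inr ⟨(j : ℕ) - s, hjs⟩) = j := by
    apply Fin.ext
    simp only [e, Equiv.trans_apply, finSumFinEquiv_apply_right, finCongr_apply_coe,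
      Fin.coe_natAdd]
    omega
  have hb : bfin j = bb (Sum.inr ⟨(j : ℕ) - s, hjs⟩) := by
    rw [show bfin = bb.reindex e from rfl, Basis.reindex_apply]
    congr 1
    rw [Equiv.symm_apply_eq]
    exact hje.symm
  show bfin j ∈ W
  rw [hb]
  have : bb (Sum.inr ⟨(j : ℕ) - s, hjs⟩) =
      (bW ⟨(j : ℕ) - s, hjs⟩ : Fin N → ℝ) := by
    rw [show bb = (bW'.prod bW).map (Submodule.prodEquivOfIsCompl W' W hcompl.symm) from rfl,
      Basis.map_apply, Basis.prod_apply]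
    simp
  rw [this]
  exact (bW _).2

end BasisTail

/-- Lemma 4.7: if `A` is a matrix of homogeneous linear forms in
`ξ₁, …, ξ_d` of rank `r` over the field `𝔽 = ℝ(ξ₁, …, ξ_d)`, then there are invertible
real matrices `B, B'` such that `BAB'` has a zero block of size `(N₁ - r) × (N₂ - r)` in the
lower right corner. -/
theorem statement_15 (d N₁ N₂ : ℕ) (a : Fin N₁ → Fin N₂ → Fin d → ℝ) (r : ℕ)
    (A : Matrix (Fin N₁) (Fin N₂) (MvPolynomial (Fin d) ℝ))
    (hA : ∀ i j, A i j = ∑ k, MvPolynomial.C (a i j k) * MvPolynomial.X k)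
    (hr : (A.map (algebraMap (MvPolynomial (Fin d) ℝ)
        (FractionRing (MvPolynomial (Fin d) ℝ)))).rank = r) :
    ∃ (B : Matrix (Fin N₁) (Fin N₁) ℝ) (B' : Matrix (Fin N₂) (Fin N₂) ℝ),
      IsUnit B ∧ IsUnit B' ∧
      ∀ (i : Fin N₁) (j : Fin N₂), r ≤ (i : ℕ) → r ≤ (j : ℕ) →
        (B.map (algebraMap ℝ (MvPolynomial (Fin d) ℝ)) * A *
          B'.map (algebraMap ℝ (MvPolynomial (Fin d) ℝ))) i j = 0 := by
  classical
  set φ : MvPolynomial (Fin d) ℝ →+* FractionRing (MvPolynomial (Fin d) ℝ) :=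
    algebraMap (MvPolynomial (Fin d) ℝ) (FractionRing (MvPolynomial (Fin d) ℝ)) with hφ
  -- real coefficient matrices
  set Ak : Fin d → Matrix (Fin N₁) (Fin N₂) ℝ :=
    fun k => Matrix.of fun p q => a p q k with hAk
  set Ac : (Fin d → ℝ) → Matrix (Fin N₁) (Fin N₂) ℝ :=
    fun c => Matrix.of fun p q => ∑ k, a p q k * c k with hAc
  have hAc_eval : ∀ c : Fin d → ℝ, A.map (MvPolynomial.eval c) = Ac c := by
    intro c
    ext p q
    rw [Matrix.map_apply, hA p q, map_sum]
    simp [hAc]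
  -- specialization rank bound
  have hspec : ∀ c : Fin d → ℝ, (Ac c).rank ≤ r := by
    intro c
    obtain ⟨s, hs⟩ : ∃ s, (Ac c).rank = s := ⟨_, rfl⟩
    rw [hs]
    obtain ⟨f, g, hu⟩ := exists_invertible_submatrix (Ac c) hs
    have hdetR : ((Ac c).submatrix f g).det ≠ 0 :=
      ((Matrix.isUnit_iff_isUnit_det _).mp hu).ne_zero
    have hsub_eval : (Ac c).submatrix f g = (A.submatrix f g).map (MvPolynomial.eval c) := by
      rw [← hAc_eval c, Matrix.submatrix_map]
    have hdetP : (A.submatrix f g).det ≠ 0 := by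
      intro h0
      apply hdetR
      rw [hsub_eval, ← RingHom.mapMatrix_apply, ← RingHom.map_det, h0, map_zero]
    have hdetF : ((A.map φ).submatrix f g).det ≠ 0 := by
      rw [Matrix.submatrix_map, ← RingHom.mapMatrix_apply, ← RingHom.map_det]
      intro h0
      exact hdetP (IsFractionRing.injective (MvPolynomial (Fin d) ℝ)
        (FractionRing (MvPolynomial (Fin d) ℝ)) (by rwa [map_zero]))
    have := le_rank_of_submatrix (A.map φ) f g
      ((Matrix.isUnit_iff_isUnit_det _).mpr (isUnit_iff_ne_zero.mpr hdetF))
    rwa [hr] at this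
  -- choose a maximizer of the specialized rank
  set S : Set ℕ := {n | ∃ c : Fin d → ℝ, (Ac c).rank = n} with hS
  have hS0 : S.Nonempty := ⟨(Ac 0).rank, 0, rfl⟩
  have hSb : BddAbove S := ⟨r, by rintro n ⟨c, rfl⟩; exact hspec c⟩
  obtain ⟨c₀, hc₀⟩ : sSup S ∈ S := Nat.sSup_mem hS0 hSb
  set M₀ : Matrix (Fin N₁) (Fin N₂) ℝ := Ac c₀ with hM₀
  set r₀ : ℕ := M₀.rank with hr₀def
  have hr₀r : r₀ ≤ r := hspec c₀
  have hmaxc : ∀ c : Fin d → ℝ, (Ac c).rank ≤ r₀ := by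
    intro c
    have h1 : (Ac c).rank ≤ sSup S := le_csSup hSb ⟨c, rfl⟩
    rw [← hc₀] at h1
    exact h1
  -- the pencil bound
  have hpencil : ∀ (k : Fin d) (t : ℝ), (M₀ + t • Ak k).rank ≤ M₀.rank := by
    intro k t
    have heq : M₀ + t • Ak k = Ac (c₀ + fun l => if l = k then t else 0) := by
      ext p q
      simp only [hM₀, hAc, Matrix.add_apply, Matrix.smul_apply, Matrix.of_apply, hAk,
        smul_eq_mul, Pi.add_apply]
      rw [Finset.sum_congr rfl (fun l _ => mul_add (a p q l) (c₀ l) _), Finset.sum_add_distrib]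
      congr 1
      rw [Finset.sum_congr rfl (fun l _ => by rw [mul_ite, mul_zero])]
      rw [Finset.sum_ite_eq' Finset.univ k (fun l => a p q l * t), if_pos (Finset.mem_univ k)]
      ring
    rw [heq]
    exact hmaxc _
  -- Flanders pairing
  have hF : ∀ (k : Fin d) (u : Fin N₁ → ℝ) (v : Fin N₂ → ℝ),
      M₀ᵀ.mulVec u = 0 → M₀.mulVec v = 0 → u ⬝ᵥ (Ak k).mulVec v = 0 :=
    fun k u v hu hv => flanders M₀ (Ak k) (hpencil k) hu hv
  -- kernels
  have hr₀N₁ : r₀ ≤ N₁ := le_trans (Matrix.rank_le_card_height M₀) (by simp)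
  have hr₀N₂ : r₀ ≤ N₂ := le_trans (Matrix.rank_le_card_width M₀) (by simp)
  have hkerV : finrank ℝ (LinearMap.ker M₀.mulVecLin) = N₂ - r₀ := by
    have := LinearMap.finrank_range_add_finrank_ker M₀.mulVecLin
    have hdom : finrank ℝ (Fin N₂ → ℝ) = N₂ := by simp [Module.finrank_pi]
    rw [hdom] at this
    have hrge : finrank ℝ (LinearMap.range M₀.mulVecLin) = r₀ := rfl
    omega
  have hkerU : finrank ℝ (LinearMap.ker M₀ᵀ.mulVecLin) = N₁ - r₀ := by
    have := LinearMap.finrank_range_add_finrank_ker M₀ᵀ.mulVecLin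
    have hdom : finrank ℝ (Fin N₁ → ℝ) = N₁ := by simp [Module.finrank_pi]
    rw [hdom] at this
    have hrge : finrank ℝ (LinearMap.range M₀ᵀ.mulVecLin) = M₀ᵀ.rank := rfl
    have hrT : M₀ᵀ.rank = r₀ := by rw [Matrix.rank_transpose]
    omega
  obtain ⟨b₁, hb₁li, hb₁mem⟩ := exists_basis_with_tail hr₀N₁
    (LinearMap.ker M₀ᵀ.mulVecLin) hkerU
  obtain ⟨b₂, hb₂li, hb₂mem⟩ := exists_basis_with_tail hr₀N₂
    (LinearMap.ker M₀.mulVecLin) hkerV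
  -- the matrices
  set B : Matrix (Fin N₁) (Fin N₁) ℝ := Matrix.of fun i p => b₁ i p with hB
  set B' : Matrix (Fin N₂) (Fin N₂) ℝ := Matrix.of fun p j => b₂ j p with hB'
  have hBu : IsUnit B := Matrix.linearIndependent_rows_iff_isUnit.mp hb₁li
  have hB'u : IsUnit B' := by
    rw [← Matrix.linearIndependent_cols_iff_isUnit]
    exact hb₂li
  refine ⟨B, B', hBu, hB'u, ?_⟩
  intro i j hi hj
  -- the scalar vanishing for each k
  have hzero : ∀ k : Fin d, ∑ q : Fin N₂, (∑ p : Fin N₁, b₁ i p * a p q k) * b₂ j q = 0 := by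
    intro k
    have hu : M₀ᵀ.mulVec (b₁ i) = 0 := by
      have := hb₁mem i (le_trans hr₀r hi)
      rwa [LinearMap.mem_ker, Matrix.mulVecLin_apply] at this
    have hv : M₀.mulVec (b₂ j) = 0 := by
      have := hb₂mem j (le_trans hr₀r hj)
      rwa [LinearMap.mem_ker, Matrix.mulVecLin_apply] at this
    have h0 := hF k (b₁ i) (b₂ j) hu hv
    rw [Matrix.dotProduct_mulVec] at h0
    -- h0 : (Ak k).vecMul (b₁ i) ⬝ᵥ b₂ j = 0
    rw [← h0]
    rfl
  -- final entry computation
  have hentry : (B.map (algebraMap ℝ (MvPolynomial (Fin d) ℝ)) * A *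
      B'.map (algebraMap ℝ (MvPolynomial (Fin d) ℝ))) i j =
      ∑ k : Fin d, MvPolynomial.C (∑ q : Fin N₂, (∑ p : Fin N₁, b₁ i p * a p q k) * b₂ j q) *
        MvPolynomial.X k := by
    rw [Matrix.mul_apply]
    have step1 : ∀ q : Fin N₂, (B.map (algebraMap ℝ (MvPolynomial (Fin d) ℝ)) * A) i q =
        ∑ k : Fin d, MvPolynomial.C (∑ p : Fin N₁, b₁ i p * a p q k) * MvPolynomial.X k := by
      intro q
      rw [Matrix.mul_apply]
      have : ∀ p : Fin N₁, (B.map (algebraMap ℝ (MvPolynomial (Fin d) ℝ))) i p * A p q =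
          ∑ k : Fin d, MvPolynomial.C (b₁ i p * a p q k) * MvPolynomial.X k := by
        intro p
        rw [Matrix.map_apply, hA p q, Finset.mul_sum]
        refine Finset.sum_congr rfl fun k _ => ?_
        rw [MvPolynomial.algebraMap_eq, ← mul_assoc, ← MvPolynomial.C_mul]
        rfl
      rw [Finset.sum_congr rfl fun p _ => this p, Finset.sum_comm]
      refine Finset.sum_congr rfl fun k _ => ?_
      rw [← Finset.sum_mul, ← map_sum]
    calc ∑ q : Fin N₂, (B.map (algebraMap ℝ (MvPolynomial (Fin d) ℝ)) * A) i q *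
        (B'.map (algebraMap ℝ (MvPolynomial (Fin d) ℝ))) q j
        = ∑ q : Fin N₂, ∑ k : Fin d,
            MvPolynomial.C ((∑ p : Fin N₁, b₁ i p * a p q k) * b₂ j q) * MvPolynomial.X k := by
          refine Finset.sum_congr rfl fun q _ => ?_
          rw [step1 q, Finset.sum_mul]
          refine Finset.sum_congr rfl fun k _ => ?_
          rw [Matrix.map_apply, MvPolynomial.algebraMap_eq]
          have : (B' : Matrix (Fin N₂) (Fin N₂) ℝ) q j = b₂ j q := rfl
          rw [this, MvPolynomial.C_mul]
          ring
      _ = ∑ k : Fin d, MvPolynomial.C (∑ q : Fin N₂, (∑ p : Fin N₁, b₁ i p * a p q k) * b₂ j q) *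
            MvPolynomial.X k := by
          rw [Finset.sum_comm]
          refine Finset.sum_congr rfl fun k _ => ?_
          rw [← Finset.sum_mul, ← map_sum]
  rw [hentry]
  refine Finset.sum_eq_zero fun k _ => ?_
  rw [hzero k, map_zero, zero_mul]

end GOZZK
end
end
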